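/- arXiv:2206.00836 — 2 statements merged into one kernel-verified Lean document; each statement's English description precedes it below -/
import Mathlib

section
/- The chromatic number of the graph F_n^s equals ⌈n/a⌉ = s + ⌈b/a⌉, where n = as + b with a ≥ 2 and 0 ≤ b ≤ s-1. -/
/-- Cyclic distance `min (|x-y|, n - |x-y|)` on `ℤ/nℤ` for `x, y ∈ {1,…,n}`. -/
def cdist (n x y : ℕ) : ℕ := min (max x y - min x y) (n - (max x y - min x y))

/-- The graph `F_n^s` on vertex set `[n] = {1,…,n}`: distinct `x, y` are adjacent
iff their cyclic distance is `< s`. -/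
def Fgraph (n s : ℕ) : SimpleGraph ℕ :=
  SimpleGraph.fromRel (fun x y => x ∈ Finset.Icc 1 n ∧ y ∈ Finset.Icc 1 n ∧ cdist n x y < s)

lemma cdist_comm (n x y : ℕ) : cdist n x y = cdist n y x := by
  unfold cdist; rw [max_comm, min_comm x y]

lemma arith_aux {s a b n : ℕ} (ha : 2 ≤ a) (hn : n = a * s + b) :
    (n + a - 1) / a = s + (b + a - 1) / a := by
  have h : n + a - 1 = a * s + (b + a - 1) := by omega
  rw [h, Nat.mul_add_div (by omega)]

lemma cdist_lt_of_modeq {s a b n x y u v : ℕ} (ha : 2 ≤ a)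
    (hb : b ≤ s - 1) (hn : n = a * s + b)
    (hx1 : 1 ≤ x) (hxn : x ≤ n) (hy1 : 1 ≤ y) (hyn : y ≤ n)
    (hu : u < s) (hv : v < s) (hle : x + u ≤ y + v) (hxy : x ≠ y)
    (hmod : (x + u) % n = (y + v) % n) : cdist n x y < s := by
  have h2s : 2 * s ≤ a * s := Nat.mul_le_mul_right s ha
  have hdvd : n ∣ (y + v) - (x + u) := (Nat.modEq_iff_dvd' hle).mp hmod
  obtain ⟨k, hk⟩ := hdvd
  have hk1 : k ≤ 1 := by
    by_contra h
    push_neg at h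
    have : n * 2 ≤ n * k := Nat.mul_le_mul_left n (by omega)
    omega
  interval_cases k <;> (unfold cdist; omega)

lemma indep_card_le {s a b n : ℕ} (hs : 2 ≤ s) (ha : 2 ≤ a) (hb : b ≤ s - 1)
    (hn : n = a * s + b) (S : Finset ℕ) (hS : S ⊆ Finset.Icc 1 n)
    (hind : ∀ x ∈ S, ∀ y ∈ S, x ≠ y → ¬ cdist n x y < s) : S.card ≤ a := by
  have h2s : 2 * s ≤ a * s := Nat.mul_le_mul_right s ha
  have hn0 : 0 < n := by omega
  have hsn : s ≤ n := by omega
  haveI : NeZero n := ⟨hn0.ne'⟩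
  set t : ℕ → Finset (ZMod n) :=
    fun x => (Finset.range s).image (fun u : ℕ => ((x : ZMod n) + (u : ZMod n))) with ht
  have hcard : ∀ x : ℕ, (t x).card = s := by
    intro x
    rw [ht]
    rw [Finset.card_image_of_injOn, Finset.card_range]
    intro u hu v hv he
    simp only [Finset.mem_coe, Finset.mem_range] at hu hv
    have huv : ((u : ℕ) : ZMod n) = ((v : ℕ) : ZMod n) := add_left_cancel he
    have h1 := ZMod.val_cast_of_lt (n := n) (lt_of_lt_of_le hu hsn)
    have h2 := ZMod.val_cast_of_lt (n := n) (lt_of_lt_of_le hv hsn)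
    rw [huv] at h1
    omega
  have hdisj : ∀ x ∈ S, ∀ y ∈ S, x ≠ y → Disjoint (t x) (t y) := by
    intro x hx y hy hxy
    have hxI := Finset.mem_Icc.mp (hS hx)
    have hyI := Finset.mem_Icc.mp (hS hy)
    rw [Finset.disjoint_left]
    intro z hz1 hz2
    simp only [ht, Finset.mem_image, Finset.mem_range] at hz1 hz2
    obtain ⟨u, hu, he1⟩ := hz1
    obtain ⟨v, hv, he2⟩ := hz2
    have he : ((x + u : ℕ) : ZMod n) = ((y + v : ℕ) : ZMod n) := by
      push_cast
      rw [he1, he2]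
    have hmod : (x + u) % n = (y + v) % n := (ZMod.natCast_eq_natCast_iff _ _ _).mp he
    rcases le_total (x + u) (y + v) with h | h
    · exact hind x hx y hy hxy
        (cdist_lt_of_modeq ha hb hn hxI.1 hxI.2 hyI.1 hyI.2 hu hv h hxy hmod)
    · have := cdist_lt_of_modeq ha hb hn hyI.1 hyI.2 hxI.1 hxI.2 hv hu h
        (Ne.symm hxy) hmod.symm
      rw [cdist_comm] at this
      exact hind x hx y hy hxy this
  have hbU : (S.biUnion t).card = S.card * s := by
    rw [Finset.card_biUnion hdisj]
    rw [Finset.sum_congr rfl (fun x _ => hcard x), Finset.sum_const, smul_eq_mul]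
  have hle : (S.biUnion t).card ≤ Fintype.card (ZMod n) := Finset.card_le_univ _
  rw [ZMod.card n] at hle
  rw [hbU] at hle
  by_contra h
  push_neg at h
  have h2 : (a + 1) * s ≤ S.card * s := Nat.mul_le_mul_right s h
  have h3 : (a + 1) * s = a * s + s := by ring
  omega

lemma lower_bound {s a b n : ℕ} (hs : 2 ≤ s) (ha : 2 ≤ a) (hb : b ≤ s - 1)
    (hn : n = a * s + b) :
    ∀ c : ℕ, (Fgraph n s).Colorable c → (n + a - 1) / a ≤ c := by
  intro c hc
  obtain ⟨C⟩ := hc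
  have h2s : 2 * s ≤ a * s := Nat.mul_le_mul_right s ha
  have hkey : n ≤ c * a := by
    have hIcc : (Finset.Icc 1 n).card = n := by rw [Nat.card_Icc]; omega
    have hsum := Finset.card_eq_sum_card_fiberwise
      (s := Finset.Icc 1 n) (t := Finset.univ) (f := fun x => C x)
      (fun x _ => Finset.mem_univ _)
    have hfib : ∀ i : Fin c, ((Finset.Icc 1 n).filter (fun x => C x = i)).card ≤ a := by
      intro i
      apply indep_card_le hs ha hb hn
      · exact Finset.filter_subset _ _
      · intro x hx y hy hxy hlt
        simp only [Finset.mem_filter] at hx hy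
        have hadj : (Fgraph n s).Adj x y := by
          rw [Fgraph, SimpleGraph.fromRel_adj]
          exact ⟨hxy, Or.inl ⟨hx.1, hy.1, hlt⟩⟩
        exact (C.valid hadj) (hx.2.trans hy.2.symm)
    calc n = (Finset.Icc 1 n).card := hIcc.symm
      _ = ∑ i : Fin c, ((Finset.Icc 1 n).filter (fun x => C x = i)).card := hsum
      _ ≤ ∑ _i : Fin c, a := Finset.sum_le_sum (fun i _ => hfib i)
      _ = c * a := by rw [Finset.sum_const, Finset.card_univ, Fintype.card_fin, smul_eq_mul]
  have hmc : c * a = a * c := Nat.mul_comm c a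
  have hdm : a * ((n + a - 1) / a) + (n + a - 1) % a = n + a - 1 :=
    Nat.div_add_mod (n + a - 1) a
  have hrem : (n + a - 1) % a < a := Nat.mod_lt _ (by omega)
  by_contra h
  push_neg at h
  have h4 : a * (c + 1) ≤ a * ((n + a - 1) / a) := Nat.mul_le_mul_left a (by omega)
  have h5 : a * (c + 1) = a * c + a := by ring
  omega

/-- Core coloring construction with opaque parameters:
`n = a*Q + m`, blocks of sizes `Q+1` (the first `m` of them) and `Q`. -/
lemma colorable_core (s n Q m a : ℕ) (hs : 2 ≤ s) (hQ1 : 1 ≤ Q)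
    (hn : n = a * Q + m) (hm1 : 1 ≤ m) (hmle : m ≤ a) (ha1 : 1 ≤ a)
    (hcase : s ≤ Q ∨ (Q + 1 = s ∧ m = a)) :
    (Fgraph n s).Colorable (Q + 1) := by
  set st : ℕ → ℕ := fun i => i * Q + min i m with hst
  have hmono : ∀ i j, i ≤ j → st i ≤ st j := by
    intro i j hij
    have h1 : i * Q ≤ j * Q := Nat.mul_le_mul_right Q hij
    simp only [hst]
    omega
  have hstep : ∀ i, i < a → st i + s ≤ st (i + 1) := by
    intro i hi
    have hb : (i + 1) * Q = i * Q + Q := by ring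
    simp only [hst]
    rcases hcase with h | ⟨h1, h2⟩ <;> omega
  have hst_n : st a = n := by
    simp only [hst]
    omega
  set col : ℕ → ℕ :=
    fun x => if x - 1 < m * Q + m then (x - 1) % (Q + 1) else (x - 1 - (m * Q + m)) % Q
    with hcol
  set blk : ℕ → ℕ :=
    fun x => if x - 1 < m * Q + m then (x - 1) / (Q + 1) else m + (x - 1 - (m * Q + m)) / Q
    with hblk
  have hdecomp : ∀ x, 1 ≤ x → x ≤ n →
      x - 1 = st (blk x) + col x ∧ blk x < a := by
    intro x h1 hx
    by_cases hp : x - 1 < m * Q + m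
    · simp only [hcol, hblk, if_pos hp]
      have hplt : x - 1 < m * (Q + 1) := by
        have hbr : m * (Q + 1) = m * Q + m := by ring
        omega
      have hdlt : (x - 1) / (Q + 1) < m := (Nat.div_lt_iff_lt_mul (by omega)).mpr hplt
      have hdam : (Q + 1) * ((x - 1) / (Q + 1)) + (x - 1) % (Q + 1) = x - 1 :=
        Nat.div_add_mod (x - 1) (Q + 1)
      have hbr2 : (Q + 1) * ((x - 1) / (Q + 1))
          = (x - 1) / (Q + 1) * Q + (x - 1) / (Q + 1) := by ring
      constructor
      · simp only [hst]
        rw [min_eq_left hdlt.le]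
        omega
      · omega
    · simp only [hcol, hblk, if_neg hp]
      push_neg at hp
      have hma : m < a := by
        rcases Nat.lt_or_ge m a with h | h
        · exact h
        · exfalso
          have hme : m = a := le_antisymm hmle h
          have : m * Q = a * Q := by rw [hme]
          omega
      have hdam : Q * ((x - 1 - (m * Q + m)) / Q) + (x - 1 - (m * Q + m)) % Q
          = x - 1 - (m * Q + m) := Nat.div_add_mod _ Q
      have hsplit : m * Q + (a - m) * Q = a * Q := by
        rw [← Nat.add_mul]
        congr 1
        omega
      have htlt : x - 1 - (m * Q + m) < (a - m) * Q := by omega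
      have hdlt : (x - 1 - (m * Q + m)) / Q < a - m :=
        (Nat.div_lt_iff_lt_mul (by omega)).mpr htlt
      constructor
      · simp only [hst]
        rw [min_eq_right (Nat.le_add_right m _)]
        have hbr : (m + (x - 1 - (m * Q + m)) / Q) * Q
            = m * Q + Q * ((x - 1 - (m * Q + m)) / Q) := by ring
        omega
      · omega
  have hcol_lt : ∀ x, col x < Q + 1 := by
    intro x
    simp only [hcol]
    split_ifs
    · exact Nat.mod_lt _ (by omega)
    · have : (x - 1 - (m * Q + m)) % Q < Q := Nat.mod_lt _ (by omega)
      omega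
  have hmain : ∀ x y, 1 ≤ x → x ≤ n → 1 ≤ y → y ≤ n → blk x < blk y →
      col x = col y → s ≤ cdist n x y := by
    intro x y hx1 hxn hy1 hyn hij hcc
    obtain ⟨hxe, hxa⟩ := hdecomp x hx1 hxn
    obtain ⟨hye, hya⟩ := hdecomp y hy1 hyn
    have h1 := hstep (blk x) (by omega)
    have h2 := hstep (blk y) hya
    have h3 := hmono (blk x + 1) (blk y) hij
    have h4 := hmono (blk y + 1) a hya
    rw [hst_n] at h4
    unfold cdist
    omega
  have hkey : ∀ x y, 1 ≤ x → x ≤ n → 1 ≤ y → y ≤ n → x ≠ y →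
      col x = col y → s ≤ cdist n x y := by
    intro x y hx1 hxn hy1 hyn hxy hcc
    rcases lt_trichotomy (blk x) (blk y) with h | h | h
    · exact hmain x y hx1 hxn hy1 hyn h hcc
    · exfalso
      obtain ⟨hxe, _⟩ := hdecomp x hx1 hxn
      obtain ⟨hye, _⟩ := hdecomp y hy1 hyn
      rw [h] at hxe
      omega
    · rw [cdist_comm]
      exact hmain y x hy1 hyn hx1 hxn h hcc.symm
  refine ⟨SimpleGraph.Coloring.mk (fun v => ⟨col v, hcol_lt v⟩) ?_⟩
  intro x y hadj hc
  rw [Fgraph, SimpleGraph.fromRel_adj] at hadj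
  have hcc : col x = col y := by
    simpa using congrArg Fin.val hc
  obtain ⟨hne, hrel⟩ := hadj
  have hlt : x ∈ Finset.Icc 1 n ∧ y ∈ Finset.Icc 1 n ∧ cdist n x y < s := by
    rcases hrel with h | h
    · exact h
    · exact ⟨h.2.1, h.1, by rw [cdist_comm]; exact h.2.2⟩
  obtain ⟨hxI, hyI, hlt⟩ := hlt
  rw [Finset.mem_Icc] at hxI hyI
  exact absurd hlt (not_lt.mpr (hkey x y hxI.1 hxI.2 hyI.1 hyI.2 hne hcc))

lemma colorable_ub {s a b n : ℕ} (hs : 2 ≤ s) (ha : 2 ≤ a) (hb : b ≤ s - 1)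
    (hn : n = a * s + b) : (Fgraph n s).Colorable ((n + a - 1) / a) := by
  have hq_eq : (n + a - 1) / a = s + (b + a - 1) / a := arith_aux ha hn
  have h2s : 2 * s ≤ a * s := Nat.mul_le_mul_right s ha
  have hdm : a * ((n + a - 1) / a) + (n + a - 1) % a = n + a - 1 :=
    Nat.div_add_mod (n + a - 1) a
  have hrem : (n + a - 1) % a < a := Nat.mod_lt _ (by omega)
  obtain ⟨q, hq⟩ : ∃ q, q = (n + a - 1) / a := ⟨_, rfl⟩
  rw [← hq] at hq_eq hdm ⊢
  have hqs : s ≤ q := by rw [hq_eq]; exact Nat.le_add_right s _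
  obtain ⟨Q, hQ⟩ : ∃ Q, q = Q + 1 := ⟨q - 1, by omega⟩
  rw [hQ] at hdm hq_eq ⊢
  have haQ : a * (Q + 1) = a * Q + a := by ring
  -- n ≤ a*(Q+1) ≤ n + a - 1, hence m := n - a*Q satisfies 1 ≤ m ≤ a
  have hm_ex : ∃ m, n = a * Q + m ∧ 1 ≤ m ∧ m ≤ a := ⟨n - a * Q, by omega, by omega, by omega⟩
  obtain ⟨m, hnm, hm1, hmle⟩ := hm_ex
  apply colorable_core s n Q m a hs (by omega) hnm hm1 hmle (by omega)
  rcases Nat.eq_zero_or_pos b with hb0 | hb1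
  · right
    have hdiv0 : (b + a - 1) / a = 0 := by
      apply Nat.div_eq_of_lt
      omega
    constructor
    · omega
    · -- n = a * s and Q + 1 = s: a*(Q+1) = a*Q + a = a*s so m = a
      have hQs : Q + 1 = s := by omega
      have : a * (Q + 1) = a * s := by rw [hQs]
      omega
  · left
    have : 1 ≤ (b + a - 1) / a := by
      rw [Nat.le_div_iff_mul_le (by omega)]
      omega
    omega

/-- With `n = a*s + b`, `0 ≤ b ≤ s-1`, `a ≥ 2`: the chromatic number of
`F_n^s` equals `⌈n/a⌉`, which equals `s + ⌈b/a⌉`. -/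
theorem stmt_6 (s a b n : ℕ) (hs : 2 ≤ s) (ha : 2 ≤ a) (hb : b ≤ s - 1)
    (hn : n = a * s + b) :
    (Fgraph n s).chromaticNumber = (((n + a - 1) / a : ℕ) : ℕ∞) ∧
    (n + a - 1) / a = s + (b + a - 1) / a := by
  refine ⟨?_, arith_aux ha hn⟩
  apply le_antisymm
  · exact (colorable_ub hs ha hb hn).chromaticNumber_le
  · rw [SimpleGraph.chromaticNumber]
    exact le_iInf₂ fun c hc => by
      exact_mod_cast lower_bound hs ha hb hn c hc
end

section
/- If a ≥ s - 1 where n = as + b with 0 ≤ b ≤ s - 1 and a ≥ 2, then χ(F_n^s) = s + ⌈b/a⌉ ≤ s + 1. -/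
lemma Fkey (s a b : ℕ) (hs : 1 ≤ s) (hba : b ≤ a)
    (z₁ z₂ : ℕ) (h12 : z₁ < z₂) (h2 : z₂ < a * s + b)
    (hc : (if z₁ < b * (s+1) then z₁ % (s+1) else (z₁ - b * (s+1)) % s) =
          (if z₂ < b * (s+1) then z₂ % (s+1) else (z₂ - b * (s+1)) % s)) :
    s ≤ z₂ - z₁ ∧ z₂ - z₁ + s ≤ a * s + b := by
  have hsub : z₂ - z₁ + z₁ = z₂ := Nat.sub_add_cancel h12.le
  have hA : b * s ≤ a * s := Nat.mul_le_mul_right s hba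
  split_ifs at hc with h1B h2B h2B
  · -- both in first region
    obtain ⟨t, ht⟩ := (Nat.modEq_iff_dvd' h12.le).mp hc
    have ht0 : 0 < t := by
      rcases Nat.eq_zero_or_pos t with rfl | h
      · simp at ht; omega
      · exact h
    have hlt : (s+1) * t < (s+1) * b := by
      rw [← ht, mul_comm (s+1) b]
      exact lt_of_le_of_lt (Nat.sub_le _ _) h2B
    have htb : t < b := Nat.lt_of_mul_lt_mul_left hlt
    have h3 : (s+1) * (t+1) ≤ (s+1) * b := Nat.mul_le_mul_left _ (by omega)
    have h5 : s * 1 ≤ s * t := Nat.mul_le_mul_left _ ht0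
    constructor
    · rw [ht]; linarith only [h5]
    · rw [ht]; linarith only [h3, hA, Nat.zero_le (s*b), Nat.zero_le b]
  · -- z₁ in first region, z₂ in second
    have hB2 : b * (s+1) ≤ z₂ := not_lt.mp h2B
    have hz1 : (s+1) * (z₁ / (s+1)) + z₁ % (s+1) = z₁ := Nat.div_add_mod z₁ (s+1)
    have hz2 : s * ((z₂ - b * (s+1)) / s) + (z₂ - b * (s+1)) % s = z₂ - b * (s+1) := Nat.div_add_mod _ s
    have hcs : (z₂ - b * (s+1)) % s < s := Nat.mod_lt _ (by omega)
    set p := z₁ / (s+1) with hp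
    set q := (z₂ - b * (s+1)) / s with hq
    set c := (z₂ - b * (s+1)) % s with hcdef
    have hz2' : z₂ = b * (s+1) + (s * q + c) := by
      rw [hz2]; exact (Nat.add_sub_cancel' hB2).symm
    have hpb : p < b := (Nat.div_lt_iff_lt_mul (by omega)).mpr h1B
    have hz1' : z₁ = (s+1) * p + c := by rw [← hc]; exact hz1.symm
    have hkey : s * (b + q) < s * a := by linarith only [hz2', h2]
    have hbq : b + q < a := Nat.lt_of_mul_lt_mul_left hkey
    have hq1 : s * (b + q + 1) ≤ s * a := Nat.mul_le_mul_left _ hbq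
    have hp1 : (s+1) * (p+1) ≤ (s+1) * b := Nat.mul_le_mul_left _ (by omega)
    constructor
    · have h6 : z₁ + s ≤ z₂ := by linarith only [hz1', hz2', hp1, Nat.zero_le (s*q)]
      omega
    · have h6 : z₂ + s ≤ a * s + b + z₁ := by
        linarith only [hz1', hz2', hq1, Nat.zero_le (s*p), Nat.zero_le p]
      omega
  · omega
  · -- both in second region
    have hB1 : b * (s+1) ≤ z₁ := not_lt.mp h1B
    have hle : z₁ - b * (s+1) ≤ z₂ - b * (s+1) := Nat.sub_le_sub_right h12.le _
    obtain ⟨t, ht⟩ := (Nat.modEq_iff_dvd' hle).mp hc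
    have hzz : z₂ - b * (s+1) - (z₁ - b * (s+1)) = z₂ - z₁ := by
      rw [Nat.sub_sub_sub_cancel_right hB1]
    rw [hzz] at ht
    have ht0 : 0 < t := by
      rcases Nat.eq_zero_or_pos t with rfl | h
      · simp at ht; omega
      · exact h
    have hlt : s * (b + t) < s * a := by linarith only [ht, hsub, hB1, h2]
    have hbt : b + t < a := Nat.lt_of_mul_lt_mul_left hlt
    have h3 : s * (b + t + 1) ≤ s * a := Nat.mul_le_mul_left _ hbt
    have h5 : s * 1 ≤ s * t := Nat.mul_le_mul_left _ ht0
    constructor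
    · rw [ht]; linarith only [h5]
    · rw [ht]; linarith only [h3, Nat.zero_le (s*b), Nat.zero_le b]

lemma Fgraph_adj (n s x y : ℕ) :
    (Fgraph n s).Adj x y ↔
      x ≠ y ∧ x ∈ Finset.Icc 1 n ∧ y ∈ Finset.Icc 1 n ∧ cdist n x y < s := by
  have hcomm : cdist n y x = cdist n x y := by
    simp [cdist, max_comm, min_comm]
  constructor
  · rintro ⟨hne, ⟨h1, h2, h3⟩ | ⟨h1, h2, h3⟩⟩
    · exact ⟨hne, h1, h2, h3⟩
    · exact ⟨hne, h2, h1, hcomm ▸ h3⟩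
  · rintro ⟨h1, h2, h3, h4⟩
    exact ⟨h1, Or.inl ⟨h2, h3, h4⟩⟩

/-- If `a ≥ s - 1` (with `a ≥ 2`, `0 ≤ b ≤ s - 1`, `n = a*s + b`, `s ≥ 2`),
then `χ(F_n^s) = s + ⌈b/a⌉ ≤ s + 1`. -/
theorem stmt_12 (s a b n : ℕ) (hs : 2 ≤ s) (ha : 2 ≤ a) (has : s - 1 ≤ a)
    (hb : b ≤ s - 1) (hn : n = a * s + b) :
    (Fgraph n s).chromaticNumber = ((s + (b + a - 1) / a : ℕ) : ℕ∞) ∧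
    s + (b + a - 1) / a ≤ s + 1 := by
  have hba : b ≤ a := by omega
  obtain ⟨e, he⟩ : ∃ e, (b + a - 1) / a = e := ⟨_, rfl⟩
  obtain ⟨N, hN⟩ : ∃ N, a * s = N := ⟨_, rfl⟩
  have hnN : n = N + b := by rw [hn, hN]
  have h2s : 2 * s ≤ N := by rw [← hN]; exact Nat.mul_le_mul_right s ha
  have hee : e ≤ 1 := by
    rw [← he]
    have h2 : (b + a - 1) / a < 2 := (Nat.div_lt_iff_lt_mul (by omega)).mpr (by omega)
    omega
  have he0 : b = 0 → e = 0 := by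
    intro hb0
    rw [← he, hb0]
    exact Nat.div_eq_of_lt (by omega)
  have he1 : 1 ≤ b → e = 1 := by
    intro hb1
    have h1 : 1 ≤ (b + a - 1) / a := (Nat.le_div_iff_mul_le (by omega)).mpr (by omega)
    omega
  -- the coloring function
  set fc : ℕ → ℕ := fun x =>
    if x - 1 < b * (s+1) then (x-1) % (s+1) else ((x-1) - b * (s+1)) % s with hfc
  have hfk : ∀ x, fc x < s + e := by
    intro x
    rw [hfc]
    dsimp only
    split_ifs with h
    · have hb1 : 1 ≤ b := by
        rcases Nat.eq_zero_or_pos b with rfl | h'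
        · simp at h
        · exact h'
      have := Nat.mod_lt (x-1) (show 0 < s + 1 by omega)
      have := he1 hb1
      omega
    · have := Nat.mod_lt ((x-1) - b * (s+1)) (show 0 < s by omega)
      omega
  -- proper
  have main : ∀ x y, x ∈ Finset.Icc 1 n → y ∈ Finset.Icc 1 n → x < y →
      cdist n x y < s → fc x ≠ fc y := by
    intro x y hx hy hxy hcd heq
    rw [Finset.mem_Icc] at hx hy
    have hk := Fkey s a b (by omega) hba (x-1) (y-1) (by omega)
      (by rw [hN]; omega) (by rw [hfc] at heq; exact heq)
    rw [hN] at hk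
    have hmax : max x y - min x y = y - x := by
      rw [max_eq_right hxy.le, min_eq_left hxy.le]
    rw [cdist, hmax, min_lt_iff] at hcd
    omega
  have hcol : (Fgraph n s).Colorable (s + e) := by
    refine ⟨SimpleGraph.Coloring.mk (fun x => ⟨fc x, hfk x⟩) ?_⟩
    intro v w hadj heq
    rw [Fin.mk.injEq] at heq
    rw [Fgraph_adj] at hadj
    obtain ⟨hne, hv, hw, hcd⟩ := hadj
    rcases lt_or_gt_of_ne hne with h | h
    · exact main v w hv hw h hcd heq
    · have hcomm : cdist n w v = cdist n v w := by simp [cdist, max_comm, min_comm]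
      exact main w v hw hv h (hcomm ▸ hcd) heq.symm
  -- lower bound
  have hnocol : ¬ (Fgraph n s).Colorable (s + e - 1) := by
    rcases Nat.eq_zero_or_pos b with hb0 | hb1
    · -- b = 0 : clique of size s, colors s - 1
      rw [he0 hb0]
      intro hco
      have hclq : (Fgraph n s).IsClique ↑(Finset.Icc 1 s) := by
        intro x hx y hy hne
        rw [Finset.mem_coe, Finset.mem_Icc] at hx hy
        rw [Fgraph_adj]
        refine ⟨hne, ?_, ?_, ?_⟩
        · rw [Finset.mem_Icc]; omega
        · rw [Finset.mem_Icc]; omega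
        · have h1 : max x y - min x y < s := by
            rcases le_total x y with h | h
            · rw [max_eq_right h, min_eq_left h]; omega
            · rw [max_eq_left h, min_eq_right h]; omega
          exact lt_of_le_of_lt (min_le_left _ _) h1
      have := hclq.card_le_of_colorable hco
      rw [Nat.card_Icc] at this
      omega
    · -- b ≥ 1 : counting
      rw [he1 hb1]
      have hse : s + 1 - 1 = s := by omega
      rw [hse]
      rintro ⟨C⟩
      have key : ∀ c : Fin s, ((Finset.Icc 1 n).filter (fun x => C x = c)).card ≤ a := by
        intro c
        set I := (Finset.Icc 1 n).filter (fun x => C x = c) with hI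
        rcases I.eq_empty_or_nonempty with hIe | hIne
        · rw [hIe]; simp
        · set m := I.min' hIne with hm
          have hmI : m ∈ I := I.min'_mem hIne
          have pairfact : ∀ x ∈ I, ∀ y ∈ I, x < y → s ≤ y - x ∧ y - x + s ≤ n := by
            intro x hx y hy hxy
            rw [hI, Finset.mem_filter, Finset.mem_Icc] at hx hy
            have hnadj : ¬ (Fgraph n s).Adj x y := by
              intro hadj'
              exact (C.valid hadj') (hx.2.trans hy.2.symm)
            rw [Fgraph_adj] at hnadj
            have hcd : ¬ cdist n x y < s := by
              intro hcd
              exact hnadj ⟨by omega, by rw [Finset.mem_Icc]; omega,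
                by rw [Finset.mem_Icc]; omega, hcd⟩
            have hmax : max x y - min x y = y - x := by
              rw [max_eq_right hxy.le, min_eq_left hxy.le]
            rw [cdist, hmax, not_lt, le_min_iff] at hcd
            omega
          have hinj : Set.InjOn (fun x => (x - m)/s) I := by
            have aux : ∀ x ∈ I, ∀ y ∈ I, x < y → (x - m)/s ≠ (y - m)/s := by
              intro x hx y hy hxy heq2
              have hsle := (pairfact x hx y hy hxy).1
              have hmx : m ≤ x := I.min'_le x hx
              have hstep : (x - m) + s ≤ y - m := by omega
              have hdiv : ((x - m) + s)/s ≤ (y - m)/s := Nat.div_le_div_right hstep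
              rw [Nat.add_div_right _ (by omega)] at hdiv
              omega
            intro x hx y hy heq2
            rcases Nat.lt_trichotomy x y with h | h | h
            · exact absurd heq2 (aux x hx y hy h)
            · exact h
            · exact absurd heq2.symm (aux y hy x hx h)
          have hmap : ∀ x ∈ I, (fun x => (x - m)/s) x ∈ Finset.range a := by
            intro x hx
            rw [Finset.mem_range]
            rcases eq_or_ne x m with rfl | hne'
            · simp; omega
            · have hmx : m ≤ x := I.min'_le x hx
              have hp := (pairfact m hmI x hx (by omega)).2
              rw [Nat.div_lt_iff_lt_mul (by omega : 0 < s), hN]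
              omega
          have := Finset.card_le_card_of_injOn _ hmap hinj
          rwa [Finset.card_range] at this
      have hsum := Finset.card_eq_sum_card_fiberwise
        (f := fun x => C x) (s := Finset.Icc 1 n) (t := Finset.univ)
        (fun x _ => Finset.mem_univ _)
      have hcard : (Finset.Icc 1 n).card = n := by rw [Nat.card_Icc]; omega
      have hsum' : n = ∑ c : Fin s, ((Finset.Icc 1 n).filter (fun x => C x = c)).card := by
        exact hcard.symm.trans hsum
      have hle : ∑ c : Fin s, ((Finset.Icc 1 n).filter (fun x => C x = c)).card ≤ s * a := by
        calc ∑ c : Fin s, ((Finset.Icc 1 n).filter (fun x => C x = c)).card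
            ≤ ∑ _c : Fin s, a := Finset.sum_le_sum (fun c _ => key c)
          _ = s * a := by rw [Finset.sum_const, Finset.card_univ, Fintype.card_fin, smul_eq_mul]
      have hsa : s * a = N := by rw [← hN, mul_comm]
      omega
  -- assemble
  rw [he]
  constructor
  · apply le_antisymm
    · exact hcol.chromaticNumber_le
    · rw [SimpleGraph.chromaticNumber]
      refine le_iInf₂ fun m hm => ?_
      rw [Nat.cast_le]
      by_contra hlt
      push_neg at hlt
      exact hnocol ((Set.mem_setOf_eq ▸ hm).mono (by omega))
  · omega
end
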